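/- In the ℤ_N toric code on the L×L torus, the logical string operators X̄ = ∏_{y ∈ ℤ/L} X_{h((0,y))} (product of shift operators over all horizontal edges in the column x = 0) and Z̄ = ∏_{x ∈ ℤ/L} Z_{h((x,0))} (product of clock operators over all horizontal edges in the row y = 0) commute with every vertex operator A_v and every plaquette operator B_p, and satisfy the Weyl relation Z̄ · X̄ = ω · X̄ · Z̄ with ω = exp(2πi/N). -/
import Mathlib


noncomputable section

open Matrix

/-- Vertices of the `L×L` torus. -/
abbrev TVertex (L : ℕ) : Type := ZMod L × ZMod L

/-- Edges of the `L×L` torus: `(v, false)` is the horizontal edge `h(v)`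
and `(v, true)` is the vertical edge `u(v)`. -/
abbrev TEdge (L : ℕ) : Type := TVertex L × Bool

/-- Edge configurations valued in `ℤ/N`. -/
abbrev TConfig (L N : ℕ) : Type := TEdge L → ZMod N

/-- The root of unity `ω = exp(2πi/N)`. -/
def tcOmega (N : ℕ) : ℂ := Complex.exp (2 * Real.pi * Complex.I / N)

/-- The horizontal edge at vertex `v`. -/
def hEdge (L : ℕ) (v : TVertex L) : TEdge L := (v, false)

/-- The vertical edge at vertex `v`. -/
def uEdge (L : ℕ) (v : TVertex L) : TEdge L := (v, true)

/-- The shift operator `X_e`: `(X_e)_{f,g} = 1` iff `f = g + δ_e`. -/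
def tcX (L N : ℕ) [NeZero L] [NeZero N] (e : TEdge L) :
    Matrix (TConfig L N) (TConfig L N) ℂ :=
  fun f g => if f = g + Pi.single e 1 then 1 else 0

/-- The clock operator `Z_e`: diagonal with entry `ω^{f(e)}` at configuration `f`. -/
def tcZ (L N : ℕ) [NeZero L] [NeZero N] (e : TEdge L) :
    Matrix (TConfig L N) (TConfig L N) ℂ :=
  Matrix.diagonal fun f => tcOmega N ^ (f e).val

/-- The vertex operator `A_v = X_{h(v)}·X_{u(v)}·X_{h(v-(1,0))}†·X_{u(v-(0,1))}†`. -/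
def tcA (L N : ℕ) [NeZero L] [NeZero N] (v : TVertex L) :
    Matrix (TConfig L N) (TConfig L N) ℂ :=
  tcX L N (hEdge L v) * tcX L N (uEdge L v) *
    (tcX L N (hEdge L (v - ((1 : ZMod L), (0 : ZMod L)))))ᴴ *
    (tcX L N (uEdge L (v - ((0 : ZMod L), (1 : ZMod L)))))ᴴ

/-- The plaquette operator `B_p = Z_{h(p)}·Z_{u(p+(1,0))}·Z_{h(p+(0,1))}†·Z_{u(p)}†`. -/
def tcB (L N : ℕ) [NeZero L] [NeZero N] (p : TVertex L) :
    Matrix (TConfig L N) (TConfig L N) ℂ :=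
  tcZ L N (hEdge L p) * tcZ L N (uEdge L (p + ((1 : ZMod L), (0 : ZMod L)))) *
    (tcZ L N (hEdge L (p + ((0 : ZMod L), (1 : ZMod L)))))ᴴ *
    (tcZ L N (uEdge L p))ᴴ

/-- The logical string operator `X̄ = ∏_{y ∈ ℤ/L} X_{h((0,y))}`: the product of the shift
operators over all horizontal edges in the column `x = 0`. -/
def tcXbar (L N : ℕ) [NeZero L] [NeZero N] : Matrix (TConfig L N) (TConfig L N) ℂ :=
  (List.ofFn fun y : Fin L => tcX L N (hEdge L ((0 : ZMod L), (y : ZMod L)))).prod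

/-- The logical string operator `Z̄ = ∏_{x ∈ ℤ/L} Z_{h((x,0))}`: the product of the clock
operators over all horizontal edges in the row `y = 0`. -/
def tcZbar (L N : ℕ) [NeZero L] [NeZero N] : Matrix (TConfig L N) (TConfig L N) ℂ :=
  (List.ofFn fun x : Fin L => tcZ L N (hEdge L ((x : ZMod L), (0 : ZMod L)))).prod

namespace TCAux

variable (L N : ℕ) [NeZero L] [NeZero N]

/-- shift operator by a configuration -/
def tS (c : TConfig L N) : Matrix (TConfig L N) (TConfig L N) ℂ :=
  fun f g => if f = g + c then 1 else 0

variable {L N}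

lemma tS_mul (c d : TConfig L N) : tS L N c * tS L N d = tS L N (c + d) := by
  ext f g
  simp only [tS, mul_apply, ite_mul, one_mul, zero_mul]
  rw [Finset.sum_eq_single (g + d)]
  · rw [add_assoc, add_comm d c]; simp
  · intro k _ hk; simp [hk]
  · simp

lemma tS_ct (c : TConfig L N) : (tS L N c)ᴴ = tS L N (-c) := by
  ext f g
  simp only [tS, conjTranspose_apply]
  rw [if_congr (show (g = f + c) ↔ (f = g + -c) from
    ⟨fun h => by simp [h], fun h => by simp [h]⟩) rfl rfl]
  split <;> simp

lemma tS_zero : tS L N 0 = 1 := by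
  ext f g
  simp [tS, one_apply, eq_comm]

lemma diag_tS (φ : TConfig L N → ℂ) (c : TConfig L N) :
    diagonal φ * tS L N c = tS L N c * diagonal (fun g => φ (g + c)) := by
  ext f g
  rw [diagonal_mul, mul_diagonal]
  simp only [tS]
  by_cases h : f = g + c
  · simp [h]
  · simp [h]

lemma list_prod_tS (l : List (TConfig L N)) :
    (l.map (tS L N)).prod = tS L N l.sum := by
  induction l with
  | nil => simp [tS_zero]
  | cons a t ih => simp [ih, tS_mul]

lemma list_prod_diag {ι : Type*} [Fintype ι] [DecidableEq ι]
    (l : List (ι → ℂ)) :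
    (l.map (fun φ => diagonal φ)).prod = diagonal (fun i => (l.map (fun φ => φ i)).prod) := by
  induction l with
  | nil => ext i j; simp [one_apply, diagonal]
  | cons a t ih =>
      simp only [List.map_cons, List.prod_cons, ih, diagonal_mul_diagonal]

/-! ### phase `pe` -/

def pe (N : ℕ) [NeZero N] (a : ZMod N) : ℂ := tcOmega N ^ a.val

lemma omega_ne_zero : tcOmega N ≠ 0 := Complex.exp_ne_zero _

lemma omega_pow_N : tcOmega N ^ N = 1 := by
  rw [tcOmega, ← Complex.exp_nat_mul]
  have hN0 : (N : ℂ) ≠ 0 := Nat.cast_ne_zero.mpr (NeZero.ne N)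
  rw [show (N : ℂ) * (2 * Real.pi * Complex.I / N) = 2 * Real.pi * Complex.I by
    rw [mul_comm, div_mul_eq_mul_div, mul_div_assoc, div_self hN0, mul_one]]
  exact Complex.exp_two_pi_mul_I

lemma omega_pow_mod (k : ℕ) : tcOmega N ^ (k % N) = tcOmega N ^ k := by
  conv_rhs => rw [← Nat.mod_add_div k N, pow_add, pow_mul, omega_pow_N, one_pow, mul_one]

lemma pe_add (a b : ZMod N) : pe N (a + b) = pe N a * pe N b := by
  rw [pe, pe, pe, ZMod.val_add, omega_pow_mod, pow_add]

lemma pe_zero : pe N 0 = 1 := by simp [pe]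

lemma pe_neg_mul (a : ZMod N) : pe N (-a) * pe N a = 1 := by
  rw [← pe_add, neg_add_cancel, pe_zero]

lemma star_omega : star (tcOmega N) = (tcOmega N)⁻¹ := by
  refine eq_inv_of_mul_eq_one_left ?_
  rw [Complex.star_def, tcOmega, ← Complex.exp_conj, ← Complex.exp_add]
  rw [show (starRingEnd ℂ) (2 * Real.pi * Complex.I / N) + 2 * Real.pi * Complex.I / N = 0 by
    rw [map_div₀]; simp [Complex.conj_I, map_ofNat]; ring]
  exact Complex.exp_zero

lemma star_pe (a : ZMod N) : star (pe N a) = pe N (-a) := by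
  have h2 : pe N a ≠ 0 := by
    simp [pe, omega_ne_zero]
  rw [pe, star_pow, star_omega, inv_pow, ← pe]
  field_simp
  rw [← pe_add]
  simp [pe_zero]

lemma pe_sum {ι : Type*} (s : Finset ι) (c : ι → ZMod N) :
    ∏ x ∈ s, pe N (c x) = pe N (∑ x ∈ s, c x) := by
  classical
  induction s using Finset.induction_on with
  | empty => simp [pe_zero]
  | insert h ih => simp_all [pe_add]

end TCAux

namespace TCAux
variable {L N : ℕ} [NeZero L] [NeZero N]

lemma pe_one : pe N 1 = tcOmega N := by
  rcases eq_or_lt_of_le (Nat.one_le_iff_ne_zero.mpr (NeZero.ne N)) with h | h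
  · have hN : N = 1 := h.symm
    subst hN
    have : ((1 : ZMod 1)).val = 0 := rfl
    rw [pe, this, pow_zero, tcOmega]
    rw [show ((1:ℕ):ℂ) = 1 by norm_num, div_one]
    exact (Complex.exp_two_pi_mul_I).symm
  · have : Fact (1 < N) := ⟨h⟩
    rw [pe, ZMod.val_one, pow_one]

lemma pe_shift_cancel (a b t : ZMod N) :
    pe N (a + t) * pe N (-(b + t)) = pe N a * pe N (-b) := by
  rw [neg_add, pe_add, pe_add]
  have h : pe N t * pe N (-t) = 1 := by rw [mul_comm]; exact pe_neg_mul t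
  calc pe N a * pe N t * (pe N (-b) * pe N (-t))
      = pe N a * pe N (-b) * (pe N t * pe N (-t)) := by ring
    _ = pe N a * pe N (-b) := by rw [h, mul_one]

lemma sum_ind {M : Type*} [AddCommMonoid M] (b : ZMod L) (z : M) :
    ∑ x : Fin L, (if (x : ZMod L) = b then z else 0) = z := by
  rw [Finset.sum_eq_single (⟨b.val, b.val_lt⟩ : Fin L)]
  · simp [ZMod.natCast_rightInverse b]
  · intro k _ hk
    have hne : ((k : ZMod L) ≠ b) := by
      intro h
      apply hk
      apply Fin.ext
      have := congrArg ZMod.val h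
      rwa [ZMod.val_natCast_of_lt k.isLt] at this
    simp [hne]
  · simp

lemma sum_ind_and {M : Type*} [AddCommMonoid M] (b : ZMod L) (P : Prop) [Decidable P] (z : M) :
    ∑ x : Fin L, (if ((x : ZMod L) = b ∧ P) then z else 0) = if P then z else 0 := by
  by_cases hP : P <;> simp [hP, sum_ind]

lemma sum_ind_and' {M : Type*} [AddCommMonoid M] (b : ZMod L) (P : Prop) [Decidable P] (z : M) :
    ∑ x : Fin L, (if (P ∧ b = (x : ZMod L)) then z else 0) = if P then z else 0 := by
  by_cases hP : P <;> simp only [hP, true_and, false_and, if_false, and_true, if_true]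
  · calc ∑ x : Fin L, (if b = (x : ZMod L) then z else 0)
        = ∑ x : Fin L, (if (x : ZMod L) = b then z else 0) :=
          Finset.sum_congr rfl (fun x _ => if_congr eq_comm rfl rfl)
      _ = z := sum_ind b z
  · simp

/-! ### normal forms of the operators -/

variable (L N)

def aC (v : TVertex L) : TConfig L N :=
  Pi.single (hEdge L v) 1 + Pi.single (uEdge L v) 1
    + -(Pi.single (hEdge L (v - ((1 : ZMod L), (0 : ZMod L)))) 1)
    + -(Pi.single (uEdge L (v - ((0 : ZMod L), (1 : ZMod L)))) 1)

def xC : TConfig L N := ∑ y : Fin L, Pi.single (hEdge L ((0 : ZMod L), (y : ZMod L))) 1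

def bPh (p : TVertex L) : TConfig L N → ℂ := fun f =>
  pe N (f (hEdge L p)) * pe N (f (uEdge L (p + ((1 : ZMod L), (0 : ZMod L)))))
    * pe N (-(f (hEdge L (p + ((0 : ZMod L), (1 : ZMod L))))))
    * pe N (-(f (uEdge L p)))

def zPh : TConfig L N → ℂ := fun f => ∏ x : Fin L, pe N (f (hEdge L ((x : ZMod L), (0 : ZMod L))))

variable {L N}

lemma tcX_eq (e : TEdge L) : tcX L N e = tS L N (Pi.single e 1) := rfl

lemma tcZ_eq (e : TEdge L) : tcZ L N e = diagonal (fun f => pe N (f e)) := rfl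

lemma tcA_eq (v : TVertex L) : tcA L N v = tS L N (aC L N v) := by
  rw [tcA, tcX_eq, tcX_eq, tcX_eq, tcX_eq, tS_ct, tS_ct, tS_mul, tS_mul, tS_mul, aC]

lemma tcB_eq (p : TVertex L) : tcB L N p = diagonal (bPh L N p) := by
  rw [tcB, tcZ_eq, tcZ_eq, tcZ_eq, tcZ_eq, diagonal_conjTranspose, diagonal_conjTranspose,
    diagonal_mul_diagonal, diagonal_mul_diagonal, diagonal_mul_diagonal]
  refine congrArg diagonal ?_
  funext f
  simp only [Pi.mul_apply, Pi.star_apply, star_pe, bPh]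

lemma tcXbar_eq : tcXbar L N = tS L N (xC L N) := by
  rw [tcXbar]
  rw [show (List.ofFn fun y : Fin L => tcX L N (hEdge L ((0 : ZMod L), (y : ZMod L))))
      = (List.ofFn fun y : Fin L =>
          (Pi.single (hEdge L ((0 : ZMod L), (y : ZMod L))) 1 : TConfig L N)).map (tS L N) by
    rw [List.map_ofFn]; rfl]
  rw [list_prod_tS, xC, List.sum_ofFn]

lemma tcZbar_eq : tcZbar L N = diagonal (zPh L N) := by
  rw [tcZbar]
  rw [show (List.ofFn fun x : Fin L => tcZ L N (hEdge L ((x : ZMod L), (0 : ZMod L))))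
      = (List.ofFn fun x : Fin L =>
          (fun f : TConfig L N => pe N (f (hEdge L ((x : ZMod L), (0 : ZMod L)))))).map
            (fun φ => diagonal φ) by
    rw [List.map_ofFn]; rfl]
  rw [list_prod_diag]
  refine congrArg diagonal ?_
  funext f
  simp only [zPh]
  rw [show (List.ofFn fun x : Fin L =>
      (fun f : TConfig L N => pe N (f (hEdge L ((x : ZMod L), (0 : ZMod L)))))).map (fun φ => φ f)
      = List.ofFn fun x : Fin L => pe N (f (hEdge L ((x : ZMod L), (0 : ZMod L)))) by
    rw [List.map_ofFn]; rfl]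
  rw [List.prod_ofFn]

/-! ### evaluation of `xC` -/

lemma xC_u (w : TVertex L) : xC L N (uEdge L w) = 0 := by
  rw [xC]
  simp [Finset.sum_apply, Pi.single_apply, uEdge, hEdge]

lemma xC_h (w : TVertex L) : xC L N (hEdge L w) = if w.1 = 0 then 1 else 0 := by
  rw [xC]
  simp only [Finset.sum_apply, Pi.single_apply, hEdge, Prod.mk.injEq, and_true, Prod.ext_iff]
  exact sum_ind_and' w.2 (w.1 = 0) 1

end TCAux


open TCAux

/-- The logical string operators `X̄` and `Z̄` of the `ℤ_N` toric code on the `L×L` torus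
commute with all vertex and plaquette operators, and satisfy the Weyl relation
`Z̄·X̄ = ω·X̄·Z̄` with `ω = exp(2πi/N)`. -/
theorem toric_code_logical_operators (L N : ℕ) [NeZero L] [NeZero N]
    (hL : 2 ≤ L) (hN : 1 ≤ N) :
    (∀ v : TVertex L, tcXbar L N * tcA L N v = tcA L N v * tcXbar L N) ∧
    (∀ p : TVertex L, tcXbar L N * tcB L N p = tcB L N p * tcXbar L N) ∧
    (∀ v : TVertex L, tcZbar L N * tcA L N v = tcA L N v * tcZbar L N) ∧
    (∀ p : TVertex L, tcZbar L N * tcB L N p = tcB L N p * tcZbar L N) ∧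
    tcZbar L N * tcXbar L N = tcOmega N • (tcXbar L N * tcZbar L N) := by
  refine ⟨?_, ?_, ?_, ?_, ?_⟩
  · intro v
    rw [tcXbar_eq, tcA_eq, tS_mul, tS_mul, add_comm]
  · intro p
    rw [tcXbar_eq, tcB_eq, diag_tS]
    congr 1
    refine congrArg diagonal ?_
    funext g
    have h1 : (p + ((0 : ZMod L), (1 : ZMod L))).1 = p.1 := by simp
    simp only [bPh, Pi.add_apply, xC_h, xC_u, add_zero, h1]
    by_cases h : p.1 = 0
    · simp only [h, if_true, if_pos trivial]
      linear_combination (-(pe N (g (uEdge L (p + ((1 : ZMod L), (0 : ZMod L))))) *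
        pe N (-(g (uEdge L p))))) *
        pe_shift_cancel (g (hEdge L p)) (g (hEdge L (p + ((0 : ZMod L), (1 : ZMod L))))) 1
    · simp [h]
  · intro v
    rw [tcZbar_eq, tcA_eq, diag_tS]
    congr 1
    refine congrArg diagonal ?_
    funext g
    have hS : ∑ x : Fin L, (aC L N v) (hEdge L ((x : ZMod L), (0 : ZMod L))) = 0 := by
      simp only [aC, Pi.add_apply, Pi.neg_apply, Pi.single_apply, hEdge, uEdge,
        Prod.mk.injEq, Prod.ext_iff, and_true, and_false, if_false, add_zero, neg_zero,
        Prod.fst_sub, Prod.snd_sub, sub_zero, Bool.false_eq_true]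
      rw [Finset.sum_add_distrib]
      rw [Finset.sum_neg_distrib]
      rw [sum_ind_and, sum_ind_and]
      simp
    simp only [zPh, Pi.add_apply]
    rw [Finset.prod_congr rfl (fun (x : Fin L) _ => pe_add (g (hEdge L ((x : ZMod L), (0 : ZMod L))))
      ((aC L N v) (hEdge L ((x : ZMod L), (0 : ZMod L))))), Finset.prod_mul_distrib,
      pe_sum, pe_sum, hS, pe_zero, mul_one]
  · intro p
    rw [tcZbar_eq, tcB_eq, diagonal_mul_diagonal, diagonal_mul_diagonal]
    exact congrArg diagonal (funext fun f => mul_comm _ _)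
  · rw [tcZbar_eq, tcXbar_eq, diag_tS]
    have key : (fun g => zPh L N (g + xC L N)) = fun g => tcOmega N * zPh L N g := by
      funext g
      simp only [zPh, Pi.add_apply, xC_h]
      rw [Finset.prod_congr rfl (fun x _ => pe_add _ _), Finset.prod_mul_distrib,
        pe_sum, pe_sum, sum_ind (0 : ZMod L) (1 : ZMod N), pe_one, mul_comm]
    rw [key]
    rw [show diagonal (fun g : TConfig L N => tcOmega N * zPh L N g)
        = tcOmega N • diagonal (zPh L N) by rw [← Matrix.diagonal_smul]; rfl,
      Matrix.mul_smul]
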